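/- Let n, m, p, q, r be natural numbers, let A ∈ ℝ^{n×n}, B ∈ ℝ^{n×m}, G ∈ ℝ^{n×q}, C_con ∈ ℝ^{p×n}, D_con ∈ ℝ^{p×m}, H_con ∈ ℝ^{p×q}, C_opt ∈ ℝ^{r×n}, D_opt ∈ ℝ^{r×m}, H_opt ∈ ℝ^{r×q}, let P ∈ ℝ^{n×n} be symmetric positive definite, γ ∈ (0,1], α > 0, S_φ ∈ ℝ^{(r+q)×(r+q)} symmetric, Q ∈ ℝ^{p×p} symmetric, R ∈ ℝ^{m×m} symmetric, S ∈ ℝ^{p×m}, and let φ : ℝ^r → ℝ^q satisfy the incremental sector bound S_φ. Assume the dissipation inequality: for all x ∈ ℝ^n, u ∈ ℝ^m, w ∈ ℝ^q, with x⁺ = A x + B u + G w, y = C_con x + D_con u + H_con w, z = C_opt x + D_opt u + H_opt w, one has x⁺ᵀ P x⁺ − γ xᵀ P x ≤ α (z,w)ᵀ S_φ (z,w) + (y,u)ᵀ [[Q,S],[Sᵀ,R]] (y,u). Then for any two tuples (x^1,u^1,w^1,y^1,z^1) and (x^2,u^2,w^2,y^2,z^2) each satisfying the agent equations together with the oracle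 feedback w^a = φ(z^a) (a = 1,2), the increments Δx = x^1 − x^2, Δx⁺ = x^{1,+} − x^{2,+}, Δy = y^1 − y^2, Δu = u^1 − u^2 satisfy Δx⁺ᵀ P Δx⁺ − γ Δxᵀ P Δx ≤ (Δy, Δu)ᵀ [[Q,S],[Sᵀ,R]] (Δy, Δu). -/
import Mathlib


open Matrix

/-- if an LTI agent satisfies the dissipation inequality with supply rate
`α (z,w)ᵀ S_φ (z,w) + (y,u)ᵀ [[Q,S],[Sᵀ,R]] (y,u)` and the oracle `φ` satisfies the
incremental sector bound `S_φ`, then increments of closed-loop trajectories satisfy the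
dissipation inequality with supply rate `(Δy,Δu)ᵀ [[Q,S],[Sᵀ,R]] (Δy,Δu)`. -/
theorem closed_loop_incremental_dissipativity
    (n m p q r : ℕ)
    (A : Matrix (Fin n) (Fin n) ℝ) (B : Matrix (Fin n) (Fin m) ℝ)
    (G : Matrix (Fin n) (Fin q) ℝ)
    (Ccon : Matrix (Fin p) (Fin n) ℝ) (Dcon : Matrix (Fin p) (Fin m) ℝ)
    (Hcon : Matrix (Fin p) (Fin q) ℝ)
    (Copt : Matrix (Fin r) (Fin n) ℝ) (Dopt : Matrix (Fin r) (Fin m) ℝ)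
    (Hopt : Matrix (Fin r) (Fin q) ℝ)
    (P : Matrix (Fin n) (Fin n) ℝ) (hPsymm : P.IsSymm) (hP : P.PosDef)
    (γ : ℝ) (hγ0 : 0 < γ) (hγ1 : γ ≤ 1)
    (α : ℝ) (hα : 0 < α)
    (Sφ : Matrix (Fin r ⊕ Fin q) (Fin r ⊕ Fin q) ℝ) (hSφ : Sφ.IsSymm)
    (Q : Matrix (Fin p) (Fin p) ℝ) (hQ : Q.IsSymm)
    (R : Matrix (Fin m) (Fin m) ℝ) (hR : R.IsSymm)
    (S : Matrix (Fin p) (Fin m) ℝ)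
    (φ : (Fin r → ℝ) → (Fin q → ℝ))
    (hsector : ∀ z₁ z₂ : Fin r → ℝ,
      Sum.elim (z₁ - z₂) (φ z₁ - φ z₂) ⬝ᵥ (Sφ *ᵥ Sum.elim (z₁ - z₂) (φ z₁ - φ z₂)) ≤ 0)
    (hdiss : ∀ (x : Fin n → ℝ) (u : Fin m → ℝ) (w : Fin q → ℝ),
      (A *ᵥ x + B *ᵥ u + G *ᵥ w) ⬝ᵥ (P *ᵥ (A *ᵥ x + B *ᵥ u + G *ᵥ w))
          - γ * (x ⬝ᵥ (P *ᵥ x)) ≤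
        α * (Sum.elim (Copt *ᵥ x + Dopt *ᵥ u + Hopt *ᵥ w) w ⬝ᵥ
              (Sφ *ᵥ Sum.elim (Copt *ᵥ x + Dopt *ᵥ u + Hopt *ᵥ w) w)) +
          Sum.elim (Ccon *ᵥ x + Dcon *ᵥ u + Hcon *ᵥ w) u ⬝ᵥ
            (fromBlocks Q S Sᵀ R *ᵥ Sum.elim (Ccon *ᵥ x + Dcon *ᵥ u + Hcon *ᵥ w) u))
    -- two closed-loop tuples
    (x₁ x₂ xp₁ xp₂ : Fin n → ℝ) (u₁ u₂ : Fin m → ℝ) (w₁ w₂ : Fin q → ℝ)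
    (y₁ y₂ : Fin p → ℝ) (z₁ z₂ : Fin r → ℝ)
    (hx₁ : xp₁ = A *ᵥ x₁ + B *ᵥ u₁ + G *ᵥ w₁)
    (hy₁ : y₁ = Ccon *ᵥ x₁ + Dcon *ᵥ u₁ + Hcon *ᵥ w₁)
    (hz₁ : z₁ = Copt *ᵥ x₁ + Dopt *ᵥ u₁ + Hopt *ᵥ w₁)
    (hw₁ : w₁ = φ z₁)
    (hx₂ : xp₂ = A *ᵥ x₂ + B *ᵥ u₂ + G *ᵥ w₂)
    (hy₂ : y₂ = Ccon *ᵥ x₂ + Dcon *ᵥ u₂ + Hcon *ᵥ w₂)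
    (hz₂ : z₂ = Copt *ᵥ x₂ + Dopt *ᵥ u₂ + Hopt *ᵥ w₂)
    (hw₂ : w₂ = φ z₂) :
    (xp₁ - xp₂) ⬝ᵥ (P *ᵥ (xp₁ - xp₂)) - γ * ((x₁ - x₂) ⬝ᵥ (P *ᵥ (x₁ - x₂))) ≤
      Sum.elim (y₁ - y₂) (u₁ - u₂) ⬝ᵥ
        (fromBlocks Q S Sᵀ R *ᵥ Sum.elim (y₁ - y₂) (u₁ - u₂)) := by
  have hd := hdiss (x₁ - x₂) (u₁ - u₂) (w₁ - w₂)
  have e1 : A *ᵥ (x₁ - x₂) + B *ᵥ (u₁ - u₂) + G *ᵥ (w₁ - w₂) = xp₁ - xp₂ := by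
    simp [hx₁, hx₂, Matrix.mulVec_sub]; abel
  have e2 : Ccon *ᵥ (x₁ - x₂) + Dcon *ᵥ (u₁ - u₂) + Hcon *ᵥ (w₁ - w₂) = y₁ - y₂ := by
    simp [hy₁, hy₂, Matrix.mulVec_sub]; abel
  have e3 : Copt *ᵥ (x₁ - x₂) + Dopt *ᵥ (u₁ - u₂) + Hopt *ᵥ (w₁ - w₂) = z₁ - z₂ := by
    simp [hz₁, hz₂, Matrix.mulVec_sub]; abel
  rw [e1, e2, e3] at hd
  have hw : w₁ - w₂ = φ z₁ - φ z₂ := by rw [hw₁, hw₂]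
  have hsec := hsector z₁ z₂
  rw [← hw] at hsec
  have hmul := mul_nonpos_of_nonneg_of_nonpos hα.le hsec
  linarith
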